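/- arXiv:1705.04022 — 3 statements merged into one kernel-verified Lean document; each statement's English description precedes it below -/
import Mathlib

section
/- Let x be a string of length n and y, z two length-m factors of x starting at positions i and j respectively (so y = x[i..i+m-1], z = x[j..j+m-1]), with d_H(y,z) = 1. Let L = ⌊m/3⌋. Then there exist positions i' with i ≤ i' ≤ i+m-L, i' ≡ 0 (mod L), and j' = j + (i'-i), such that x[i'..i'+L-1] = x[j'..j'+L-1]. -/
/-- The length-`m` factor of `x` starting at position `p` (requires `p + m ≤ n`). -/
def window {α : Type*} {n : ℕ} (x : Fin n → α) (p m : ℕ) (h : p + m ≤ n) : Fin m → α :=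
  fun k => x ⟨p + k, by have := k.isLt; omega⟩

/-- If the windows of length m at positions i and j of x are at Hamming
distance 1, and L = ⌊m/3⌋, then there is a position i' with i ≤ i' ≤ i+m-L, i' ≡ 0 (mod L),
such that x[i'..i'+L-1] = x[j'..j'+L-1] where j' = j + (i' - i). -/
theorem stmt_2 {α : Type*} [DecidableEq α] {n m i j : ℕ} (hm : 3 ≤ m)
    (x : Fin n → α) (hi : i + m ≤ n) (hj : j + m ≤ n)
    (h : hammingDist (window x i m hi) (window x j m hj) = 1) :
    ∃ i', ∃ (h1 : i ≤ i') (h2 : i' + m / 3 ≤ i + m), i' % (m / 3) = 0 ∧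
      window x i' (m / 3) (by omega) =
      window x (j + (i' - i)) (m / 3) (by omega) := by
  set L := m / 3 with hLdef
  have hL : 1 ≤ L := Nat.one_le_div_iff (by norm_num) |>.mpr hm
  have h3L : 3 * L ≤ m := by
    have := Nat.div_mul_le_self m 3
    omega
  rw [hammingDist, Finset.card_eq_one] at h
  obtain ⟨k, hk⟩ := h
  have heq : ∀ s : ℕ, ∀ hs : s < m, s ≠ k.val →
      x ⟨i + s, by omega⟩ = x ⟨j + s, by omega⟩ := by
    intro s hs hsk
    by_contra hne
    have hmem : (⟨s, hs⟩ : Fin m) ∈ ({i_1 | window x i m hi i_1 ≠ window x j m hj i_1} : Finset (Fin m)) := by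
      simp only [Finset.mem_filter, Finset.mem_univ, true_and]
      exact hne
    rw [hk, Finset.mem_singleton] at hmem
    exact hsk (congrArg Fin.val hmem)
  obtain ⟨a, ha1, ha2, haL, haL2⟩ :
      ∃ a, i ≤ a ∧ a ≤ i + L - 1 ∧ a % L = 0 ∧ (a + L) % L = 0 := by
    refine ⟨(i + L - 1) / L * L, ?_, Nat.div_mul_le_self _ _, Nat.mul_mod_left _ _, ?_⟩
    · have hdm : (i + L - 1) / L * L + (i + L - 1) % L = i + L - 1 := by
        rw [Nat.mul_comm]; exact Nat.div_add_mod _ _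
      have hmod := Nat.mod_lt (i + L - 1) (show 0 < L by omega)
      omega
    · have : (i + L - 1) / L * L + L = ((i + L - 1) / L + 1) * L := by rw [Nat.succ_mul]
      rw [this]; exact Nat.mul_mod_left _ _
  -- choose the block avoiding the mismatch position i + k
  by_cases hc : a ≤ i + k.val ∧ i + k.val < a + L
  · refine ⟨a + L, by omega, by omega, haL2, ?_⟩
    funext t
    have ht := t.isLt
    have hs : (a + L - i) + t.val < m := by omega
    have := heq ((a + L - i) + t.val) hs (by omega)
    show x ⟨a + L + t.val, _⟩ = x ⟨j + (a + L - i) + t.val, _⟩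
    convert this using 2 <;> (first | rfl | (simp only [Fin.mk.injEq]; omega))
  · refine ⟨a, ha1, by omega, haL, ?_⟩
    funext t
    have ht := t.isLt
    have hs : (a - i) + t.val < m := by omega
    have := heq ((a - i) + t.val) hs (by omega)
    show x ⟨a + t.val, _⟩ = x ⟨j + (a - i) + t.val, _⟩
    convert this using 2 <;> (first | rfl | (simp only [Fin.mk.injEq]; omega))
end

section
/- Fix a string x of length n and integers m ≥ 3, L = ⌊m/3⌋. For positions p, p' with x[p..p+m-1] ≈₁ x[p'..p'+m-1] (Hamming distance exactly 1 with mismatch at offset d, i.e., x[p+d] ≠ x[p'+d] and x[p+e] = x[p'+e] for all other offsets e < m), define t(p,p') = the number of multiples qL of L with p ≤ qL, qL + L ≤ p + m, and the block [qL - p, qL - p + L - 1] (in window offsets) not containing d, such that the corresponding aligned block in the other window matches. Then t(p,p') equals the number of offsets b ∈ {0,...,m-L} with (p+b) ≡ 0 mod L and the interval [b, b+L-1] not containing d, and t(p,p') ≥ 1. -/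
open scoped Classical in
/-- Fix x of length n, m ≥ 3, L = ⌊m/3⌋, and windows at p, p' of length m at
Hamming distance exactly 1 with unique mismatch offset d. Then the number t(p,p') of
aligned blocks [qL, qL+L-1] fully inside the window at p, avoiding the mismatch offset,
and matching the corresponding aligned block of the window at p', equals the number of
offsets b ∈ {0,…,m-L} with (p+b) ≡ 0 (mod L) and d ∉ [b, b+L-1]; moreover t(p,p') ≥ 1. -/
theorem stmt_6 {α : Type*} [DecidableEq α] {n m p p' d : ℕ} (hm : 3 ≤ m)
    (x : Fin n → α) (hp : p + m ≤ n) (hp' : p' + m ≤ n) (hd : d < m)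
    (hmis : x ⟨p + d, by omega⟩ ≠ x ⟨p' + d, by omega⟩)
    (hmatch : ∀ e, ∀ _he : e < m, e ≠ d → x ⟨p + e, by omega⟩ = x ⟨p' + e, by omega⟩) :
    ((Finset.range (p + m + 1)).filter (fun q =>
        p ≤ q * (m / 3) ∧ q * (m / 3) + m / 3 ≤ p + m ∧
        ¬(q * (m / 3) - p ≤ d ∧ d < q * (m / 3) - p + m / 3) ∧
        ∀ t, t < m / 3 → ∀ (h1 : q * (m / 3) + t < n) (h2 : p' + (q * (m / 3) - p) + t < n),
          x ⟨q * (m / 3) + t, h1⟩ = x ⟨p' + (q * (m / 3) - p) + t, h2⟩)).card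
      = ((Finset.range (m - m / 3 + 1)).filter (fun b =>
          (p + b) % (m / 3) = 0 ∧ ¬(b ≤ d ∧ d < b + m / 3))).card ∧
    1 ≤ ((Finset.range (p + m + 1)).filter (fun q =>
        p ≤ q * (m / 3) ∧ q * (m / 3) + m / 3 ≤ p + m ∧
        ¬(q * (m / 3) - p ≤ d ∧ d < q * (m / 3) - p + m / 3) ∧
        ∀ t, t < m / 3 → ∀ (h1 : q * (m / 3) + t < n) (h2 : p' + (q * (m / 3) - p) + t < n),
          x ⟨q * (m / 3) + t, h1⟩ = x ⟨p' + (q * (m / 3) - p) + t, h2⟩)).card := by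
  have hL1 : 1 ≤ m / 3 := by omega
  have h3L : 3 * (m / 3) ≤ m := by omega
  set L := m / 3 with hLdef
  -- the matching condition is implied by the other three conditions
  have hpred : ∀ q ∈ Finset.range (p + m + 1),
      ((p ≤ q * L ∧ q * L + L ≤ p + m ∧ ¬(q * L - p ≤ d ∧ d < q * L - p + L) ∧
        ∀ t, t < L → ∀ (h1 : q * L + t < n) (h2 : p' + (q * L - p) + t < n),
          x ⟨q * L + t, h1⟩ = x ⟨p' + (q * L - p) + t, h2⟩) ↔
      (p ≤ q * L ∧ q * L + L ≤ p + m ∧ ¬(q * L - p ≤ d ∧ d < q * L - p + L))) := by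
    intro q _
    constructor
    · rintro ⟨a, b, c, _⟩; exact ⟨a, b, c⟩
    · rintro ⟨h1, h2, h3⟩
      refine ⟨h1, h2, h3, ?_⟩
      intro t ht hh1 hh2
      have he : q * L - p + t < m := by omega
      have hne : q * L - p + t ≠ d := by omega
      have key := hmatch (q * L - p + t) he hne
      have e1 : (⟨q * L + t, hh1⟩ : Fin n) = ⟨p + (q * L - p + t), by omega⟩ := by
        simp only [Fin.mk.injEq]; omega
      have e2 : (⟨p' + (q * L - p) + t, hh2⟩ : Fin n) = ⟨p' + (q * L - p + t), by omega⟩ := by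
        simp only [Fin.mk.injEq]; omega
      rw [e1, e2]; exact key
  rw [Finset.filter_congr hpred]
  constructor
  · -- card equality via bijection q ↦ q*L - p
    apply Finset.card_bij (fun q _ => q * L - p)
    · intro q hq
      simp only [Finset.mem_filter, Finset.mem_range] at hq ⊢
      obtain ⟨hqr, h1, h2, h3⟩ := hq
      have hpb : p + (q * L - p) = q * L := by omega
      refine ⟨by omega, ?_, by omega⟩
      rw [hpb, Nat.mul_mod_left]
    · intro q1 hq1 q2 hq2 heq
      simp only [Finset.mem_filter, Finset.mem_range] at hq1 hq2
      have : q1 * L = q2 * L := by omega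
      exact Nat.eq_of_mul_eq_mul_right (by omega) this
    · intro b hb
      simp only [Finset.mem_filter, Finset.mem_range] at hb
      obtain ⟨hbr, hb0, hb1⟩ := hb
      refine ⟨(p + b) / L, ?_, ?_⟩
      · have hq : (p + b) / L * L = p + b :=
          Nat.div_mul_cancel (Nat.dvd_of_mod_eq_zero hb0)
        have hle : (p + b) / L ≤ p + b := Nat.div_le_self _ _
        simp only [Finset.mem_filter, Finset.mem_range]
        exact ⟨by omega, by omega, by omega, by omega⟩
      · have hq : (p + b) / L * L = p + b :=
          Nat.div_mul_cancel (Nat.dvd_of_mod_eq_zero hb0)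
        omega
  · -- existence of at least one block avoiding d
    obtain ⟨q0, hq0a, hq0b⟩ : ∃ q, p ≤ q * L ∧ q * L < p + L := by
      refine ⟨(p + L - 1) / L, ?_, ?_⟩ <;>
      · have h := Nat.div_add_mod' (p + L - 1) L
        have h2 := Nat.mod_lt (p + L - 1) (show 0 < L by omega)
        omega
    have hsucc : (q0 + 1) * L = q0 * L + L := by ring
    refine Finset.card_pos.mpr ?_
    by_cases hc : (q0 * L - p ≤ d ∧ d < q0 * L - p + L)
    · refine ⟨q0 + 1, ?_⟩
      simp only [Finset.mem_filter, Finset.mem_range]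
      have hle : q0 + 1 ≤ (q0 + 1) * L := Nat.le_mul_of_pos_right _ (by omega)
      exact ⟨by omega, by omega, by omega, by omega⟩
    · refine ⟨q0, ?_⟩
      simp only [Finset.mem_filter, Finset.mem_range]
      have hle : q0 ≤ q0 * L := Nat.le_mul_of_pos_right _ (by omega)
      exact ⟨by omega, by omega, by omega, by omega⟩
end

section
/- Let n, m, σ be positive integers with σ ≥ 2 and m ≥ 3·(log n / log σ) + 3 and m > 3. Then with L = ⌊m/3⌋ and B = ⌊n/L⌋, the quantity m·B·n / σ^L is at most 12·n. -/
/-- For positive integers n, m, σ with n ≥ 2, σ ≥ 2, m > 3 and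
m ≥ 3·(log n / log σ) + 3, setting L = ⌊m/3⌋ and B = ⌊n/L⌋, we have
m·B·n / σ^L ≤ 12·n. -/
theorem stmt_12 (n m σ : ℕ) (hn : 2 ≤ n) (hσ : 2 ≤ σ) (hm : 3 < m)
    (hcond : 3 * Real.log n / Real.log σ + 3 ≤ (m : ℝ)) :
    (m : ℝ) * (↑(n / (m / 3)) : ℝ) * (n : ℝ) / (σ : ℝ) ^ (m / 3) ≤ 12 * (n : ℝ) := by
  set L := m / 3 with hLdef
  have hL1 : 1 ≤ L := by omega
  have hm5L : m ≤ 5 * L := by omega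
  have hm3L2 : m ≤ 3 * L + 2 := by omega
  have hσ1 : (1 : ℝ) < (σ : ℝ) := by exact_mod_cast hσ.trans_lt' one_lt_two
  have hlogσ : 0 < Real.log σ := Real.log_pos hσ1
  have hnpos : (0 : ℝ) < n := by positivity
  -- log n ≤ L * log σ
  have hlog : Real.log n ≤ (L : ℝ) * Real.log σ := by
    have h1 : 3 * Real.log n / Real.log σ ≤ (m : ℝ) - 3 := by linarith
    have h2 : 3 * Real.log n ≤ ((m : ℝ) - 3) * Real.log σ :=
      (div_le_iff₀ hlogσ).mp h1
    have h3 : ((m : ℝ) - 3) ≤ 3 * (L : ℝ) := by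
      have : (m : ℝ) ≤ 3 * (L : ℝ) + 2 := by exact_mod_cast hm3L2
      linarith
    have h4 := mul_le_mul_of_nonneg_right h3 hlogσ.le
    linarith
  have hnσL : (n : ℝ) ≤ (σ : ℝ) ^ L := by
    have hpow : (0 : ℝ) < (σ : ℝ) ^ L := by positivity
    have := (Real.log_le_log_iff hnpos hpow).mp (by rwa [Real.log_pow])
    exact this
  have hσLpos : (0 : ℝ) < (σ : ℝ) ^ L := by positivity
  have hB : (↑(n / L) : ℝ) ≤ (n : ℝ) / (L : ℝ) := Nat.cast_div_le
  have hLpos : (0 : ℝ) < (L : ℝ) := by exact_mod_cast hL1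
  have hBn : (↑(n / L) : ℝ) ≥ 0 := by positivity
  have hmB : (m : ℝ) * (↑(n / L) : ℝ) ≤ 5 * (n : ℝ) := by
    have hmR : (m : ℝ) ≤ 5 * (L : ℝ) := by exact_mod_cast hm5L
    calc (m : ℝ) * (↑(n / L) : ℝ) ≤ (5 * (L : ℝ)) * ((n : ℝ) / (L : ℝ)) := by
          apply mul_le_mul hmR hB hBn (by positivity)
      _ = 5 * (n : ℝ) := by field_simp
  have hnum : (m : ℝ) * (↑(n / L) : ℝ) * n ≤ 5 * n * n := by
    nlinarith
  calc (m : ℝ) * (↑(n / L) : ℝ) * n / (σ : ℝ) ^ L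
      ≤ 5 * (n : ℝ) * n / (σ : ℝ) ^ L := by
        gcongr
    _ ≤ 5 * (n : ℝ) * n / n := by
        gcongr
    _ = 5 * n := by field_simp
    _ ≤ 12 * n := by linarith
end
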